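/- arXiv:2404.03297 — 3 statements merged into one kernel-verified Lean document; each statement's English description precedes it below -/
import Mathlib

section
/- Let θ > 0 and k ≥ 1 be a natural number, and let y > 0. If θ ≤ 1, then |(1 − 2θ²)·y^k| / (θ·y^{2k} + (2θ² + 1)·y^k + 2θ) ≤ 1 / (θ·y^k + 1). -/
theorem stmt_3 (θ : ℝ) (hθ : 0 < θ) (hθ1 : θ ≤ 1) (k : ℕ) (hk : 1 ≤ k) (y : ℝ) (hy : 0 < y) :
    |(1 - 2 * θ ^ 2) * y ^ k| / (θ * y ^ (2 * k) + (2 * θ ^ 2 + 1) * y ^ k + 2 * θ)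
      ≤ 1 / (θ * y ^ k + 1) := by
  have ht : (0:ℝ) < y ^ k := pow_pos hy k
  rw [mul_comm 2 k, pow_mul]
  set t := y ^ k with hts
  have hd1 : 0 < θ * t ^ 2 + (2 * θ ^ 2 + 1) * t + 2 * θ := by positivity
  have hd2 : 0 < θ * t + 1 := by positivity
  rw [div_le_div_iff₀ hd1 hd2]
  rcases abs_cases ((1 - 2 * θ ^ 2) * t) with ⟨h, _⟩ | ⟨h, _⟩ <;> rw [h] <;>
    nlinarith [mul_pos ht ht, sq_nonneg t, mul_nonneg (pow_nonneg hθ.le 3) (sq_nonneg t), mul_nonneg (sq_nonneg θ) ht.le, mul_nonneg (mul_nonneg hθ.le (sq_nonneg t)) (sub_nonneg.2 (pow_le_one₀ hθ.le hθ1 (n := 2)))]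
end

section
/- Let θ > 0, k ≥ 1, and y > 0. The 3×3 matrix P with rows (1/(1 + θy^k), θy^k/(1 + θy^k), 0), (θ/(θ + y^k + θ), y^k/(2θ + y^k), θ/(2θ + y^k)), (0, θy^k/(θy^k + 1), 1/(θy^k + 1)) has eigenvalues 1, (1 − 2θ²)y^k/(θy^{2k} + (2θ² + 1)y^k + 2θ), and 1/(θy^k + 1). -/
set_option maxHeartbeats 1000000

theorem stmt_16 (θ : ℝ) (hθ : 0 < θ) (k : ℕ) (hk : 1 ≤ k) (y : ℝ) (hy : 0 < y) :
    let P : Matrix (Fin 3) (Fin 3) ℝ :=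
      !![1 / (1 + θ * y ^ k), θ * y ^ k / (1 + θ * y ^ k), 0;
         θ / (2 * θ + y ^ k), y ^ k / (2 * θ + y ^ k), θ / (2 * θ + y ^ k);
         0, θ * y ^ k / (θ * y ^ k + 1), 1 / (θ * y ^ k + 1)]
    ∀ lam : ℝ, Matrix.det (lam • (1 : Matrix (Fin 3) (Fin 3) ℝ) - P) =
      (lam - 1) *
      (lam - (1 - 2 * θ ^ 2) * y ^ k / (θ * y ^ (2 * k) + (2 * θ ^ 2 + 1) * y ^ k + 2 * θ)) *
      (lam - 1 / (θ * y ^ k + 1)) := by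
  intro P lam
  have hyk : 0 < y ^ k := pow_pos hy k
  have h1 : (1 + θ * y ^ k) ≠ 0 := by positivity
  have h2 : (2 * θ + y ^ k) ≠ 0 := by positivity
  have h3 : (θ * y ^ k + 1) ≠ 0 := by positivity
  have h2k : y ^ (2 * k) = (y ^ k) ^ 2 := by rw [mul_comm, pow_mul]
  have h4 : (θ * y ^ (2 * k) + (2 * θ ^ 2 + 1) * y ^ k + 2 * θ) ≠ 0 := by
    rw [h2k]; positivity
  simp only [P, Matrix.det_fin_three, Matrix.smul_apply, Matrix.one_apply,
    Matrix.sub_apply, Matrix.cons_val', Matrix.cons_val_zero, Matrix.cons_val_one,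
    Matrix.head_cons, Matrix.head_fin_const, Matrix.cons_val_fin_one, Matrix.empty_val',
    Matrix.cons_val_two, Matrix.tail_cons, Matrix.of_apply]
  norm_num [Fin.ext_iff]
  rw [h2k] at h4 ⊢
  generalize y ^ k = a at *
  field_simp
  ring
end

section
/- Let c = (1 + √2)^{1/3} and y₀ = √(1 − c + 1/c). Then 0 < y₀ < 1 and y₀ is a critical point of the function α(y) = (y³ − y)/(y⁴ − 2) on the interval (0, 1), i.e., α'(y₀) = 0. -/
theorem stmt_19 :
    let c : ℝ := (1 + Real.sqrt 2) ^ ((1 : ℝ) / 3)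
    let y₀ : ℝ := Real.sqrt (1 - c + 1 / c)
    0 < y₀ ∧ y₀ < 1 ∧
      HasDerivAt (fun y : ℝ => (y ^ 3 - y) / (y ^ 4 - 2)) 0 y₀ := by
  intro c y₀
  have h2 : Real.sqrt 2 * Real.sqrt 2 = 2 := Real.mul_self_sqrt (by norm_num)
  have hs0 : 0 < Real.sqrt 2 := Real.sqrt_pos.mpr (by norm_num)
  have hbpos : (0:ℝ) < 1 + Real.sqrt 2 := by linarith
  have hc3 : c ^ 3 = 1 + Real.sqrt 2 := by
    show ((1 + Real.sqrt 2) ^ ((1:ℝ)/3)) ^ 3 = 1 + Real.sqrt 2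
    rw [← Real.rpow_natCast ((1 + Real.sqrt 2) ^ ((1:ℝ)/3)) 3,
      ← Real.rpow_mul hbpos.le]
    norm_num
  have hc1 : (1:ℝ) < c := by
    have := Real.one_lt_rpow_iff_of_pos hbpos (y := (1:ℝ)/3)
    exact this.mpr (Or.inl ⟨by linarith, by norm_num⟩)
  have hc0 : (0:ℝ) < c := by linarith
  have hs15 : Real.sqrt 2 < 1.5 := by nlinarith
  have hc14 : c < 1.4 := by nlinarith [hc3, hs15, sq_nonneg (c - 1.4), sq_nonneg (c + 1.4), mul_pos hc0 hc0]
  have htdef : 1 - c + 1 / c = (c - c ^ 2 + 1) / c := by field_simp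
  have ht0 : 0 < 1 - c + 1 / c := by
    rw [htdef]; apply div_pos _ hc0; nlinarith
  have ht1 : 1 - c + 1 / c < 1 := by
    rw [htdef, div_lt_one hc0]; nlinarith
  have hy0 : 0 < y₀ := Real.sqrt_pos.mpr ht0
  have hy2 : y₀ ^ 2 = 1 - c + 1 / c := Real.sq_sqrt ht0.le
  have hy1 : y₀ < 1 := by
    nlinarith [hy2, ht1]
  refine ⟨hy0, hy1, ?_⟩
  have hc6 : c ^ 6 = 2 * c ^ 3 + 1 := by
    linear_combination (c ^ 3 - 1 + Real.sqrt 2) * hc3 + h2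
  have ht : (1 - c + 1/c) ^ 3 - 3 * (1 - c + 1/c) ^ 2 + 6 * (1 - c + 1/c) - 2 = 0 := by
    have hcne : c ≠ 0 := ne_of_gt hc0
    field_simp
    linear_combination (-1) * hc6
  have hne : y₀ ^ 4 - 2 ≠ 0 := by nlinarith [hy2, ht0, ht1]
  have h1 : HasDerivAt (fun y : ℝ => y ^ 3 - y) (3 * y₀ ^ 2 - 1) y₀ := by
    have := (hasDerivAt_pow 3 y₀).sub (hasDerivAt_id y₀); simp at this; exact this
  have h2' : HasDerivAt (fun y : ℝ => y ^ 4 - 2) (4 * y₀ ^ 3) y₀ := by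
    simpa using (hasDerivAt_pow 4 y₀).sub_const 2
  have hd := h1.div h2' hne
  refine hd.congr_deriv (Eq.symm ?_)
  rw [eq_comm, div_eq_zero_iff]
  left
  linear_combination (-(y₀ ^ 4 + y₀ ^ 2 * (1 - c + 1/c) + (1 - c + 1/c) ^ 2)
    + 3 * (y₀ ^ 2 + (1 - c + 1/c)) - 6) * hy2 - ht
end
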